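/- Let A₁,…,A_N be n×n trace-free matrices depending smoothly on distinct times t₁,…,t_N and satisfying the Schlesinger system ∂A_k/∂t_j = [A_k,A_j]/(t_k - t_j) for j ≠ k and ∂A_j/∂t_j = -Σ_{k≠j} [A_k,A_j]/(t_k - t_j). Then the Hamiltonians H_k = Σ_{j≠k} tr(A_j A_k)/(t_k - t_j) satisfy the compatibility (closedness) condition ∂H_k/∂t_ℓ = ∂H_ℓ/∂t_k for all k, ℓ, so that Σ_k H_k dt_k is a closed one-form in the times. -/

import Mathlib

open Matrix

namespace SchlesingerHamiltonians

variable (nn N : ℕ)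

/-- The entrywise partial derivative `∂A_j/∂t_k` of a matrix-valued function
of the times. -/
noncomputable def DA (A : (Fin N → ℂ) → Matrix (Fin nn) (Fin nn) ℂ)
    (k : Fin N) (t : Fin N → ℂ) : Matrix (Fin nn) (Fin nn) ℂ :=
  Matrix.of fun a b => fderiv ℂ (fun s => A s a b) t (Pi.single k 1)

/-- If trace-free matrices `A₁,…,A_N` satisfy the Schlesinger system on an
open set of pairwise distinct times, then the Hamiltonians
`H_k = Σ_{j≠k} tr(A_j A_k)/(t_k - t_j)` satisfy
`∂H_k/∂t_ℓ = ∂H_ℓ/∂t_k`, so `Σ_k H_k dt_k` is closed. -/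
theorem schlesinger_hamiltonians_closed
    (U : Set (Fin N → ℂ)) (hU : IsOpen U)
    (hdist : ∀ t ∈ U, ∀ i j : Fin N, i ≠ j → t i ≠ t j)
    (A : Fin N → (Fin N → ℂ) → Matrix (Fin nn) (Fin nn) ℂ)
    (hdiff : ∀ (j : Fin N) (a b : Fin nn), ∀ t ∈ U,
      DifferentiableAt ℂ (fun s => A j s a b) t)
    (htrace : ∀ j, ∀ t ∈ U, (A j t).trace = 0)
    -- Schlesinger equations:
    (hSch : ∀ t ∈ U, ∀ j k : Fin N, j ≠ k →
      DA nn N (A k) j t =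
        (t k - t j)⁻¹ • (A k t * A j t - A j t * A k t))
    (hSch' : ∀ t ∈ U, ∀ j : Fin N,
      DA nn N (A j) j t =
        -∑ k ∈ Finset.univ.erase j,
            (t k - t j)⁻¹ • (A k t * A j t - A j t * A k t))
    (H : Fin N → (Fin N → ℂ) → ℂ)
    (hH : ∀ k t, H k t =
      ∑ j ∈ Finset.univ.erase k, Matrix.trace (A j t * A k t) / (t k - t j)) :
    ∀ t ∈ U, ∀ k ℓ : Fin N,
      fderiv ℂ (H k) t (Pi.single ℓ 1) = fderiv ℂ (H ℓ) t (Pi.single k 1) := by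
  have key : ∀ t ∈ U, ∀ k ℓ : Fin N, k ≠ ℓ →
      fderiv ℂ (H k) t (Pi.single ℓ 1) =
        Matrix.trace (A ℓ t * A k t) / (t k - t ℓ) ^ 2 := by
    intro t ht k ℓ hkl
    have hd : ∀ i j : Fin N, i ≠ j → t i - t j ≠ 0 :=
      fun i j h => sub_ne_zero.mpr (hdist t ht i j h)
    -- the derivative CLM of the numerator trace (A j s * A k s)
    set Lnum : Fin N → ((Fin N → ℂ) →L[ℂ] ℂ) := fun j =>
      ∑ a : Fin nn, ∑ b : Fin nn,
        (A j t a b • fderiv ℂ (fun s => A k s b a) t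
          + A k t b a • fderiv ℂ (fun s => A j s a b) t) with hLnumdef
    have hnum : ∀ j : Fin N,
        HasFDerivAt (fun s => Matrix.trace (A j s * A k s)) (Lnum j) t := by
      intro j
      have h1 : HasFDerivAt (fun s => ∑ a : Fin nn, ∑ b : Fin nn, A j s a b * A k s b a)
          (Lnum j) t := by
        apply HasFDerivAt.fun_sum
        intro a _
        apply HasFDerivAt.fun_sum
        intro b _
        exact ((hdiff j a b t ht).hasFDerivAt).mul ((hdiff k b a t ht).hasFDerivAt)
      have he : (fun s => Matrix.trace (A j s * A k s))
          = (fun s => ∑ a : Fin nn, ∑ b : Fin nn, A j s a b * A k s b a) := by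
        funext s
        simp [Matrix.trace, Matrix.mul_apply, Matrix.diag]
      rw [he]; exact h1
    -- the derivative of the full term
    set Lt : Fin N → ((Fin N → ℂ) →L[ℂ] ℂ) := fun j =>
      Matrix.trace (A j t * A k t) •
        ((-((t k - t j) ^ 2)⁻¹) •
          ((ContinuousLinearMap.proj k : (Fin N → ℂ) →L[ℂ] ℂ) - ContinuousLinearMap.proj j))
      + (t k - t j)⁻¹ • Lnum j with hLtdef
    have hterm : ∀ j : Fin N, j ≠ k →
        HasFDerivAt (fun s => Matrix.trace (A j s * A k s) / (s k - s j)) (Lt j) t := by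
      intro j hj
      have hden : HasFDerivAt (fun s : Fin N → ℂ => s k - s j)
          ((ContinuousLinearMap.proj k : (Fin N → ℂ) →L[ℂ] ℂ) - ContinuousLinearMap.proj j) t :=
        ((ContinuousLinearMap.proj k : (Fin N → ℂ) →L[ℂ] ℂ).hasFDerivAt (x := t)).sub
          ((ContinuousLinearMap.proj j : (Fin N → ℂ) →L[ℂ] ℂ).hasFDerivAt (x := t))
      have hinv : HasFDerivAt (fun s : Fin N → ℂ => (s k - s j)⁻¹)
          ((-((t k - t j) ^ 2)⁻¹) •
            ((ContinuousLinearMap.proj k : (Fin N → ℂ) →L[ℂ] ℂ) - ContinuousLinearMap.proj j)) t :=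
        (hasDerivAt_inv (hd k j (Ne.symm hj))).comp_hasFDerivAt t hden
      have := (hnum j).fun_mul hinv
      simpa [hLtdef, div_eq_mul_inv] using this
    have htot : HasFDerivAt (H k) (∑ j ∈ Finset.univ.erase k, Lt j) t := by
      have hHe : H k = fun s =>
          ∑ j ∈ Finset.univ.erase k, Matrix.trace (A j s * A k s) / (s k - s j) :=
        funext (hH k)
      rw [hHe]
      exact HasFDerivAt.fun_sum fun j hj => hterm j (Finset.ne_of_mem_erase hj)
    -- evaluate in direction Pi.single ℓ 1
    have hLnumApp : ∀ j : Fin N, (Lnum j) (Pi.single ℓ 1)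
        = Matrix.trace (DA nn N (A j) ℓ t * A k t)
          + Matrix.trace (A j t * DA nn N (A k) ℓ t) := by
      intro j
      simp only [hLnumdef, ContinuousLinearMap.sum_apply, ContinuousLinearMap.add_apply,
        ContinuousLinearMap.smul_apply, smul_eq_mul, DA, Matrix.trace, Matrix.mul_apply,
        Matrix.diag, Matrix.of_apply, Finset.sum_add_distrib]
      rw [add_comm]
      congr 1 <;>
        first
          | rfl
          | (apply Finset.sum_congr rfl; intro a _; apply Finset.sum_congr rfl; intro b _; ring)
    have heval : fderiv ℂ (H k) t (Pi.single ℓ 1)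
        = ∑ j ∈ Finset.univ.erase k,
            (Matrix.trace (A j t * A k t) *
              (-((t k - t j) ^ 2)⁻¹ * ((Pi.single ℓ 1 : Fin N → ℂ) k - (Pi.single ℓ 1 : Fin N → ℂ) j))
            + (t k - t j)⁻¹ *
              (Matrix.trace (DA nn N (A j) ℓ t * A k t)
                + Matrix.trace (A j t * DA nn N (A k) ℓ t))) := by
      rw [htot.fderiv]
      rw [ContinuousLinearMap.sum_apply]
      apply Finset.sum_congr rfl
      intro j _
      simp only [hLtdef, ContinuousLinearMap.add_apply, ContinuousLinearMap.smul_apply,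
        ContinuousLinearMap.sub_apply, ContinuousLinearMap.proj_apply, smul_eq_mul, hLnumApp j]
    rw [heval]
    -- now pure algebra with the Schlesinger equations
    set W : Fin N → ℂ := fun m =>
      Matrix.trace (A m t * A ℓ t * A k t) - Matrix.trace (A ℓ t * A m t * A k t) with hWdef
    have hWk : W k = 0 := by
      simp only [hWdef]
      rw [show A ℓ t * A k t * A k t = (A ℓ t * A k t) * A k t from rfl,
        Matrix.trace_mul_comm (A ℓ t * A k t) (A k t), ← Matrix.mul_assoc]
      exact sub_self _
    -- trace of DA(A j) in direction ℓ times A k, for j ≠ ℓ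
    have hT1 : ∀ j : Fin N, j ≠ ℓ →
        Matrix.trace (DA nn N (A j) ℓ t * A k t) = (t j - t ℓ)⁻¹ * W j := by
      intro j hj
      rw [hSch t ht ℓ j (Ne.symm hj)]
      simp [Matrix.smul_mul, Matrix.sub_mul, hWdef, mul_sub, smul_eq_mul]
    -- trace of A j times DA(A k) in direction ℓ, for j ≠ ℓ... (valid for all j)
    have hT2 : ∀ j : Fin N,
        Matrix.trace (A j t * DA nn N (A k) ℓ t) = -((t k - t ℓ)⁻¹ * W j) := by
      intro j
      rw [hSch t ht ℓ k (Ne.symm hkl)]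
      have e1 : Matrix.trace (A j t * (A k t * A ℓ t)) = Matrix.trace (A ℓ t * A j t * A k t) := by
        rw [← Matrix.mul_assoc, Matrix.trace_mul_comm (A j t * A k t) (A ℓ t), ← Matrix.mul_assoc]
      have e2 : Matrix.trace (A j t * (A ℓ t * A k t)) = Matrix.trace (A j t * A ℓ t * A k t) := by
        rw [← Matrix.mul_assoc]
      simp [Matrix.mul_smul, Matrix.mul_sub, hWdef, mul_sub, smul_eq_mul, e1, e2]
      try ring
    have hT1' : Matrix.trace (DA nn N (A ℓ) ℓ t * A k t)
        = -∑ m ∈ Finset.univ.erase ℓ, (t m - t ℓ)⁻¹ * W m := by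
      rw [hSch' t ht ℓ]
      rw [Matrix.neg_mul, Matrix.trace_neg, neg_inj, Matrix.sum_mul, Matrix.trace_sum]
      apply Finset.sum_congr rfl
      intro m _
      rw [Matrix.smul_mul, Matrix.trace_smul, Matrix.sub_mul, Matrix.trace_sub, smul_eq_mul,
        hWdef]
    have hT2' : Matrix.trace (A ℓ t * DA nn N (A k) ℓ t) = 0 := by
      rw [hT2 ℓ]
      have : W ℓ = 0 := by
        simp only [hWdef]
        exact sub_self _
      rw [this, mul_zero, neg_zero]
    -- split off the j = ℓ term
    have hmem : ℓ ∈ Finset.univ.erase k := Finset.mem_erase.mpr ⟨Ne.symm hkl, Finset.mem_univ ℓ⟩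
    rw [← Finset.add_sum_erase _ _ hmem]
    have hsingle_k : (Pi.single ℓ 1 : Fin N → ℂ) k = 0 := Pi.single_eq_of_ne hkl 1
    have hsingle_ℓ : (Pi.single ℓ 1 : Fin N → ℂ) ℓ = 1 := Pi.single_eq_same ℓ 1
    -- the j = ℓ term
    have hWsum : ∑ m ∈ Finset.univ.erase ℓ, (t m - t ℓ)⁻¹ * W m
        = ∑ m ∈ (Finset.univ.erase k).erase ℓ, (t m - t ℓ)⁻¹ * W m := by
      have hkm : k ∈ Finset.univ.erase ℓ := Finset.mem_erase.mpr ⟨hkl, Finset.mem_univ k⟩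
      rw [← Finset.add_sum_erase _ _ hkm, hWk, mul_zero, zero_add, Finset.erase_right_comm]
    have hTermℓ : Matrix.trace (A ℓ t * A k t) *
          (-((t k - t ℓ) ^ 2)⁻¹ * ((Pi.single ℓ 1 : Fin N → ℂ) k - (Pi.single ℓ 1 : Fin N → ℂ) ℓ))
        + (t k - t ℓ)⁻¹ *
          (Matrix.trace (DA nn N (A ℓ) ℓ t * A k t) + Matrix.trace (A ℓ t * DA nn N (A k) ℓ t))
        = Matrix.trace (A ℓ t * A k t) * ((t k - t ℓ) ^ 2)⁻¹
          - (t k - t ℓ)⁻¹ * ∑ m ∈ (Finset.univ.erase k).erase ℓ, (t m - t ℓ)⁻¹ * W m := by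
      rw [hsingle_k, hsingle_ℓ, hT1', hT2', hWsum]
      ring
    -- the remaining terms
    have hTermOther : ∀ j ∈ (Finset.univ.erase k).erase ℓ,
        (Matrix.trace (A j t * A k t) *
          (-((t k - t j) ^ 2)⁻¹ * ((Pi.single ℓ 1 : Fin N → ℂ) k - (Pi.single ℓ 1 : Fin N → ℂ) j))
        + (t k - t j)⁻¹ *
          (Matrix.trace (DA nn N (A j) ℓ t * A k t) + Matrix.trace (A j t * DA nn N (A k) ℓ t)))
        = (t k - t ℓ)⁻¹ * ((t j - t ℓ)⁻¹ * W j) := by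
      intro j hj
      have hjℓ : j ≠ ℓ := Finset.ne_of_mem_erase hj
      have hjk : j ≠ k := Finset.ne_of_mem_erase (Finset.mem_of_mem_erase hj)
      have hsingle_j : (Pi.single ℓ 1 : Fin N → ℂ) j = 0 := Pi.single_eq_of_ne hjℓ 1
      rw [hsingle_k, hsingle_j, hT1 j hjℓ, hT2 j]
      have h1 : t k - t j ≠ 0 := hd k j (Ne.symm hjk)
      have h2 : t j - t ℓ ≠ 0 := hd j ℓ hjℓ
      have h3 : t k - t ℓ ≠ 0 := hd k ℓ hkl
      field_simp
      ring
    rw [hTermℓ, Finset.sum_congr rfl hTermOther, ← Finset.mul_sum]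
    ring
  intro t ht k ℓ
  by_cases h : k = ℓ
  · subst h; rfl
  · rw [key t ht k ℓ h, key t ht ℓ k (Ne.symm h), Matrix.trace_mul_comm]
    congr 1
    ring

end SchlesingerHamiltonians
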